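/- Let η be a norm on ℝ^N and E a closed set with nonempty boundary. Then the signed distance d^η_E(x) := dist^η(x,E) − dist^η(x,E^c) is Lipschitz, and at every point x ∉ ∂E where d^η_E is differentiable, one has η°(∇d^η_E(x)) = 1. -/

import Mathlib

open Set

/-- The `η`-distance from a set. -/
noncomputable def etaDist {N : ℕ} (η : EuclideanSpace ℝ (Fin N) → ℝ)
    (A : Set (EuclideanSpace ℝ (Fin N))) (x : EuclideanSpace ℝ (Fin N)) : ℝ :=
  sInf {t | ∃ y ∈ A, t = η (x - y)}

/-- The `η`-signed distance from a set. -/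
noncomputable def etaSignedDist {N : ℕ} (η : EuclideanSpace ℝ (Fin N) → ℝ)
    (A : Set (EuclideanSpace ℝ (Fin N))) (x : EuclideanSpace ℝ (Fin N)) : ℝ :=
  etaDist η A x - etaDist η Aᶜ x

section Aux

variable {N : ℕ} {η : EuclideanSpace ℝ (Fin N) → ℝ}

lemma eta_zero (hhom : ∀ (c : ℝ), 0 ≤ c → ∀ x, η (c • x) = c * η x) : η 0 = 0 := by
  have := hhom 0 le_rfl 0
  simpa using this

lemma eta_nonneg (hconv : ConvexOn ℝ Set.univ η) (heven : ∀ x, η (-x) = η x)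
    (hhom : ∀ (c : ℝ), 0 ≤ c → ∀ x, η (c • x) = c * η x) (x : EuclideanSpace ℝ (Fin N)) :
    0 ≤ η x := by
  have h := hconv.2 (mem_univ x) (mem_univ (-x)) (by norm_num : (0:ℝ) ≤ 1/2)
    (by norm_num : (0:ℝ) ≤ 1/2) (by norm_num)
  have hmid : (1/2 : ℝ) • x + (1/2 : ℝ) • (-x) = 0 := by
    rw [smul_neg, add_neg_cancel]
  rw [hmid, eta_zero hhom, heven] at h
  simp only [smul_eq_mul] at h
  linarith

lemma eta_add (hconv : ConvexOn ℝ Set.univ η)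
    (hhom : ∀ (c : ℝ), 0 ≤ c → ∀ x, η (c • x) = c * η x)
    (a b : EuclideanSpace ℝ (Fin N)) : η (a + b) ≤ η a + η b := by
  have h := hconv.2 (mem_univ a) (mem_univ b) (by norm_num : (0:ℝ) ≤ 1/2)
    (by norm_num : (0:ℝ) ≤ 1/2) (by norm_num)
  have h2 : η (a + b) = 2 * η ((1/2 : ℝ) • a + (1/2 : ℝ) • b) := by
    have := hhom 2 (by norm_num) ((1/2 : ℝ) • a + (1/2 : ℝ) • b)
    rw [← this]
    congr 1
    rw [smul_add, smul_smul, smul_smul]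
    norm_num
  simp only [smul_eq_mul] at h
  rw [h2]
  linarith

lemma eta_smul (heven : ∀ x, η (-x) = η x)
    (hhom : ∀ (c : ℝ), 0 ≤ c → ∀ x, η (c • x) = c * η x)
    (c : ℝ) (x : EuclideanSpace ℝ (Fin N)) : η (c • x) = |c| * η x := by
  rcases le_or_gt 0 c with hc | hc
  · rw [hhom c hc, abs_of_nonneg hc]
  · have : c • x = -((-c) • x) := by rw [neg_smul, neg_neg]
    rw [this, heven, hhom (-c) (by linarith), abs_of_neg hc]

lemma eta_sum_le (hconv : ConvexOn ℝ Set.univ η)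
    (hhom : ∀ (c : ℝ), 0 ≤ c → ∀ x, η (c • x) = c * η x)
    (s : Finset (Fin N)) (f : Fin N → EuclideanSpace ℝ (Fin N)) :
    η (∑ i ∈ s, f i) ≤ ∑ i ∈ s, η (f i) := by
  classical
  induction s using Finset.induction with
  | empty => simp [eta_zero hhom]
  | insert _ _ hns ih =>
    rw [Finset.sum_insert hns, Finset.sum_insert hns]
    calc η (_ + _) ≤ _ + _ := eta_add hconv hhom _ _
      _ ≤ _ := by gcongr

lemma eta_upper (hconv : ConvexOn ℝ Set.univ η) (heven : ∀ x, η (-x) = η x)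
    (hhom : ∀ (c : ℝ), 0 ≤ c → ∀ x, η (c • x) = c * η x) :
    ∃ C : ℝ, 0 < C ∧ ∀ x, η x ≤ C * ‖x‖ := by
  classical
  set e : Fin N → EuclideanSpace ℝ (Fin N) := fun i => EuclideanSpace.single i 1 with he
  refine ⟨(∑ i, η (e i)) + 1, ?_, ?_⟩
  · have : 0 ≤ ∑ i, η (e i) :=
      Finset.sum_nonneg fun i _ => eta_nonneg hconv heven hhom _
    linarith
  · intro x
    have hx : x = ∑ i, x i • e i := by
      have := (EuclideanSpace.basisFun (Fin N) ℝ).sum_repr x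
      simp only [EuclideanSpace.basisFun_apply, EuclideanSpace.basisFun_repr] at this
      rw [he]; exact this.symm
    have h1 : η x ≤ ∑ i, η (x i • e i) := by
      calc η x = η (∑ i, x i • e i) := by rw [← hx]
        _ ≤ _ := eta_sum_le hconv hhom _ _
    have h2 : ∀ i, η (x i • e i) ≤ ‖x‖ * η (e i) := by
      intro i
      rw [eta_smul heven hhom]
      have hle : |x i| ≤ ‖x‖ := by
        have := EuclideanSpace.norm_eq x
        have h := Finset.single_le_sum (f := fun i => x i ^ 2)
          (fun i _ => sq_nonneg _) (Finset.mem_univ i)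
        have : |x i| = Real.sqrt (x i ^ 2) := by
          rw [Real.sqrt_sq_eq_abs]
        rw [this, EuclideanSpace.norm_eq]
        apply Real.sqrt_le_sqrt
        simpa [sq_abs, sq] using h
      have := eta_nonneg hconv heven hhom (e i)
      exact mul_le_mul_of_nonneg_right hle this
    calc η x ≤ ∑ i, η (x i • e i) := h1
      _ ≤ ∑ i, ‖x‖ * η (e i) := Finset.sum_le_sum fun i _ => h2 i
      _ = (∑ i, η (e i)) * ‖x‖ := by rw [← Finset.mul_sum, mul_comm]
      _ ≤ ((∑ i, η (e i)) + 1) * ‖x‖ := by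
        have : (0:ℝ) ≤ ‖x‖ := norm_nonneg _
        nlinarith

lemma eta_abs_sub (hconv : ConvexOn ℝ Set.univ η) (heven : ∀ x, η (-x) = η x)
    (hhom : ∀ (c : ℝ), 0 ≤ c → ∀ x, η (c • x) = c * η x)
    (a b : EuclideanSpace ℝ (Fin N)) : |η a - η b| ≤ η (a - b) := by
  have h1 : η a ≤ η (a - b) + η b := by
    have := eta_add hconv hhom (a - b) b
    simpa using this
  have h2 : η b ≤ η (a - b) + η a := by
    have := eta_add hconv hhom (b - a) a
    have hs : η (b - a) = η (a - b) := by
      rw [← heven (b - a)]; congr 1; abel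
    rw [hs] at this
    simpa using this
  rw [abs_sub_le_iff]
  constructor <;> linarith

lemma eta_continuous (hconv : ConvexOn ℝ Set.univ η) (heven : ∀ x, η (-x) = η x)
    (hhom : ∀ (c : ℝ), 0 ≤ c → ∀ x, η (c • x) = c * η x) : Continuous η := by
  obtain ⟨C, hC, hCle⟩ := eta_upper hconv heven hhom
  have : LipschitzWith (Real.toNNReal C) η := by
    apply LipschitzWith.of_dist_le_mul
    intro a b
    rw [Real.dist_eq, dist_eq_norm]
    calc |η a - η b| ≤ η (a - b) := eta_abs_sub hconv heven hhom a b
      _ ≤ C * ‖a - b‖ := hCle _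
      _ = (Real.toNNReal C : ℝ) * ‖a - b‖ := by rw [Real.coe_toNNReal _ hC.le]
  exact this.continuous

lemma eta_lower (hconv : ConvexOn ℝ Set.univ η) (heven : ∀ x, η (-x) = η x)
    (hhom : ∀ (c : ℝ), 0 ≤ c → ∀ x, η (c • x) = c * η x)
    (hpos : ∀ x, x ≠ 0 → 0 < η x) :
    ∃ m : ℝ, 0 < m ∧ ∀ x, m * ‖x‖ ≤ η x := by
  by_cases hS : (Metric.sphere (0 : EuclideanSpace ℝ (Fin N)) 1).Nonempty
  · obtain ⟨x₀, hx₀, hmin⟩ := (isCompact_sphere (0 : EuclideanSpace ℝ (Fin N)) 1).exists_isMinOn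
      hS ((eta_continuous hconv heven hhom).continuousOn)
    have hx₀ne : x₀ ≠ 0 := by
      intro h
      rw [mem_sphere_iff_norm, h] at hx₀
      simp at hx₀
    refine ⟨η x₀, hpos _ hx₀ne, fun x => ?_⟩
    rcases eq_or_ne x 0 with rfl | hx
    · simp [eta_zero hhom]
    · have hnx : (0:ℝ) < ‖x‖ := norm_pos_iff.mpr hx
      have hmem : ‖x‖⁻¹ • x ∈ Metric.sphere (0 : EuclideanSpace ℝ (Fin N)) 1 := by
        rw [mem_sphere_iff_norm, sub_zero, norm_smul, norm_inv, norm_norm]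
        field_simp
      have h1 := hmin hmem
      have h2 : η x = ‖x‖ * η (‖x‖⁻¹ • x) := by
        rw [← hhom ‖x‖ hnx.le]
        congr 1
        rw [smul_smul]
        field_simp
        rw [one_smul]
      rw [h2]
      simp only [IsMinOn, IsMinFilter] at h1
      calc η x₀ * ‖x‖ ≤ η (‖x‖⁻¹ • x) * ‖x‖ := by
            exact mul_le_mul_of_nonneg_right h1 hnx.le
        _ = ‖x‖ * η (‖x‖⁻¹ • x) := mul_comm _ _
  · refine ⟨1, one_pos, fun x => ?_⟩
    have hx : x = 0 := by
      by_contra hx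
      exact hS ⟨‖x‖⁻¹ • x, by
        rw [mem_sphere_iff_norm, sub_zero, norm_smul, norm_inv, norm_norm,
          inv_mul_cancel₀ (norm_ne_zero_iff.mpr hx)]⟩
    simp [hx, eta_zero hhom]

-- etaDist basic lemmas

lemma etaDist_bddBelow (hconv : ConvexOn ℝ Set.univ η) (heven : ∀ x, η (-x) = η x)
    (hhom : ∀ (c : ℝ), 0 ≤ c → ∀ x, η (c • x) = c * η x)
    (A : Set (EuclideanSpace ℝ (Fin N))) (x : EuclideanSpace ℝ (Fin N)) :
    BddBelow {t | ∃ y ∈ A, t = η (x - y)} :=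
  ⟨0, fun t ⟨y, _, ht⟩ => ht ▸ eta_nonneg hconv heven hhom _⟩

lemma etaDist_le (hconv : ConvexOn ℝ Set.univ η) (heven : ∀ x, η (-x) = η x)
    (hhom : ∀ (c : ℝ), 0 ≤ c → ∀ x, η (c • x) = c * η x)
    {A : Set (EuclideanSpace ℝ (Fin N))} {y : EuclideanSpace ℝ (Fin N)} (hy : y ∈ A)
    (x : EuclideanSpace ℝ (Fin N)) : etaDist η A x ≤ η (x - y) :=
  csInf_le (etaDist_bddBelow hconv heven hhom A x) ⟨y, hy, rfl⟩

lemma etaDist_nonneg (hconv : ConvexOn ℝ Set.univ η) (heven : ∀ x, η (-x) = η x)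
    (hhom : ∀ (c : ℝ), 0 ≤ c → ∀ x, η (c • x) = c * η x)
    {A : Set (EuclideanSpace ℝ (Fin N))} (hA : A.Nonempty) (x : EuclideanSpace ℝ (Fin N)) :
    0 ≤ etaDist η A x := by
  obtain ⟨y, hy⟩ := hA
  exact le_csInf ⟨_, ⟨y, hy, rfl⟩⟩ fun t ⟨z, _, ht⟩ => ht ▸ eta_nonneg hconv heven hhom _

lemma etaDist_zero_of_mem (hconv : ConvexOn ℝ Set.univ η) (heven : ∀ x, η (-x) = η x)
    (hhom : ∀ (c : ℝ), 0 ≤ c → ∀ x, η (c • x) = c * η x)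
    {A : Set (EuclideanSpace ℝ (Fin N))} {x : EuclideanSpace ℝ (Fin N)} (hx : x ∈ A) :
    etaDist η A x = 0 := by
  refine le_antisymm ?_ (etaDist_nonneg hconv heven hhom ⟨x, hx⟩ x)
  have := etaDist_le hconv heven hhom hx x
  simpa [eta_zero hhom] using this

lemma etaDist_lipschitz (hconv : ConvexOn ℝ Set.univ η) (heven : ∀ x, η (-x) = η x)
    (hhom : ∀ (c : ℝ), 0 ≤ c → ∀ x, η (c • x) = c * η x)
    {A : Set (EuclideanSpace ℝ (Fin N))} (hA : A.Nonempty)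
    (x z : EuclideanSpace ℝ (Fin N)) :
    etaDist η A x ≤ etaDist η A z + η (x - z) := by
  obtain ⟨y₀, hy₀⟩ := hA
  rw [← sub_le_iff_le_add]
  refine le_csInf ⟨_, ⟨y₀, hy₀, rfl⟩⟩ fun t ⟨y, hy, ht⟩ => ?_
  subst ht
  rw [sub_le_iff_le_add]
  calc etaDist η A x ≤ η (x - y) := etaDist_le hconv heven hhom hy x
    _ ≤ η (x - z) + η (z - y) := by
        have := eta_add hconv hhom (x - z) (z - y)
        simpa using this
    _ = η (z - y) + η (x - z) := add_comm _ _

lemma etaDist_abs_sub (hconv : ConvexOn ℝ Set.univ η) (heven : ∀ x, η (-x) = η x)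
    (hhom : ∀ (c : ℝ), 0 ≤ c → ∀ x, η (c • x) = c * η x)
    {A : Set (EuclideanSpace ℝ (Fin N))} (hA : A.Nonempty)
    (x z : EuclideanSpace ℝ (Fin N)) :
    |etaDist η A x - etaDist η A z| ≤ η (x - z) := by
  rw [abs_sub_le_iff]
  constructor
  · have := etaDist_lipschitz hconv heven hhom hA x z
    linarith
  · have := etaDist_lipschitz hconv heven hhom hA z x
    have hs : η (z - x) = η (x - z) := by
      rw [← heven (z - x)]; congr 1; abel
    rw [hs] at this
    linarith

lemma etaDist_attains (hconv : ConvexOn ℝ Set.univ η) (heven : ∀ x, η (-x) = η x)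
    (hhom : ∀ (c : ℝ), 0 ≤ c → ∀ x, η (c • x) = c * η x)
    (hpos : ∀ x, x ≠ 0 → 0 < η x)
    {A : Set (EuclideanSpace ℝ (Fin N))} (hAc : IsClosed A) (hA : A.Nonempty)
    (x : EuclideanSpace ℝ (Fin N)) :
    ∃ y ∈ A, etaDist η A x = η (x - y) := by
  obtain ⟨m, hm, hml⟩ := eta_lower hconv heven hhom hpos
  obtain ⟨y₀, hy₀⟩ := hA
  set R : ℝ := η (x - y₀) with hR
  have hR0 : 0 ≤ R := eta_nonneg hconv heven hhom _
  set K : Set (EuclideanSpace ℝ (Fin N)) := A ∩ Metric.closedBall x (R / m) with hK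
  have hKc : IsCompact K := (isCompact_closedBall x (R / m)).inter_left hAc
  have hy₀K : y₀ ∈ K := by
    refine ⟨hy₀, ?_⟩
    rw [Metric.mem_closedBall, dist_comm, dist_eq_norm]
    rw [le_div_iff₀ hm, mul_comm]
    exact hml (x - y₀)
  obtain ⟨y, hyK, hymin⟩ := hKc.exists_isMinOn ⟨y₀, hy₀K⟩
    (((eta_continuous hconv heven hhom).comp (continuous_const.sub continuous_id)).continuousOn)
  refine ⟨y, hyK.1, le_antisymm (etaDist_le hconv heven hhom hyK.1 x) ?_⟩
  refine le_csInf ⟨_, ⟨y₀, hy₀, rfl⟩⟩ fun t ⟨z, hz, ht⟩ => ?_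
  subst ht
  by_cases hzK : z ∈ Metric.closedBall x (R / m)
  · exact hymin ⟨hz, hzK⟩
  · have h1 : R / m < dist z x := by
      rw [Metric.mem_closedBall] at hzK
      linarith [not_le.mp hzK]
    have h2 : R < η (x - z) := by
      have : m * ‖x - z‖ ≤ η (x - z) := hml _
      have hd : dist z x = ‖x - z‖ := by rw [dist_comm, dist_eq_norm]
      rw [hd] at h1
      calc R = m * (R / m) := by field_simp
        _ < m * ‖x - z‖ := by exact mul_lt_mul_of_pos_left h1 hm
        _ ≤ η (x - z) := this
    have h3 : η (x - y) ≤ R := hymin hy₀K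
    linarith

lemma etaDist_closure (hconv : ConvexOn ℝ Set.univ η) (heven : ∀ x, η (-x) = η x)
    (hhom : ∀ (c : ℝ), 0 ≤ c → ∀ x, η (c • x) = c * η x)
    {A : Set (EuclideanSpace ℝ (Fin N))} (hA : A.Nonempty) (x : EuclideanSpace ℝ (Fin N)) :
    etaDist η (closure A) x = etaDist η A x := by
  obtain ⟨y₀, hy₀⟩ := hA
  obtain ⟨C, hC, hCle⟩ := eta_upper hconv heven hhom
  refine le_antisymm ?_ ?_
  · refine le_csInf ⟨_, ⟨y₀, hy₀, rfl⟩⟩ fun t ⟨y, hy, ht⟩ => ?_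
    subst ht
    exact etaDist_le hconv heven hhom (subset_closure hy) x
  · refine le_csInf ⟨_, ⟨y₀, subset_closure hy₀, rfl⟩⟩ fun t ⟨y, hy, ht⟩ => ?_
    subst ht
    refine le_of_forall_pos_le_add fun ε hε => ?_
    obtain ⟨y', hy', hd⟩ := Metric.mem_closure_iff.mp hy (ε / C) (by positivity)
    calc etaDist η A x ≤ η (x - y') := etaDist_le hconv heven hhom hy' x
      _ ≤ η (x - y) + η (y - y') := by
          have := eta_add hconv hhom (x - y) (y - y')
          simpa using this
      _ ≤ η (x - y) + ε := by
          have h1 : η (y - y') ≤ C * ‖y - y'‖ := hCle _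
          have h2 : ‖y - y'‖ = dist y y' := (dist_eq_norm _ _).symm
          have h3 : C * dist y y' < C * (ε / C) := mul_lt_mul_of_pos_left hd hC
          have h4 : C * (ε / C) = ε := by field_simp
          nlinarith [dist_nonneg (x := y) (y := y')]

open InnerProductSpace in
/-- Key lemma: directional derivative facts for the distance function at a
differentiability point outside the (closed) set. -/
lemma etaDist_gradient_key (hconv : ConvexOn ℝ Set.univ η) (heven : ∀ x, η (-x) = η x)
    (hhom : ∀ (c : ℝ), 0 ≤ c → ∀ x, η (c • x) = c * η x)
    (hpos : ∀ x, x ≠ 0 → 0 < η x)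
    {A : Set (EuclideanSpace ℝ (Fin N))} (hAc : IsClosed A) (hA : A.Nonempty)
    {x : EuclideanSpace ℝ (Fin N)} (hx : x ∉ A)
    (hd : DifferentiableAt ℝ (etaDist η A) x) :
    (∀ w, η w ≤ 1 → (inner ℝ w (gradient (etaDist η A) x) : ℝ) ≤ 1) ∧
      ∃ w, η w ≤ 1 ∧ (inner ℝ w (gradient (etaDist η A) x) : ℝ) = 1 := by
  set f : EuclideanSpace ℝ (Fin N) → ℝ := etaDist η A with hf
  set g : EuclideanSpace ℝ (Fin N) := gradient f x with hg
  have hgrad : HasGradientAt f g x := hd.hasGradientAt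
  have hF : HasFDerivAt f (toDual ℝ _ g) x := hgrad.hasFDerivAt
  -- directional derivative along v
  have hdir : ∀ v : EuclideanSpace ℝ (Fin N),
      HasDerivAt (fun t : ℝ => f (x + t • v)) (inner ℝ g v : ℝ) 0 := by
    intro v
    have hline : HasDerivAt (fun t : ℝ => x + t • v) v 0 := by
      simpa using ((hasDerivAt_id (0:ℝ)).smul_const v).const_add x
    have hF' : HasFDerivAt f (toDual ℝ _ g) (x + (0:ℝ) • v) := by
      rw [zero_smul, add_zero]; exact hF
    have := hF'.comp_hasDerivAt (0:ℝ) hline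
    simp only [toDual_apply_apply] at this; exact this
  constructor
  · -- upper bound
    intro w hw
    have hD := hdir w
    have hslope := hasDerivAt_iff_tendsto_slope.mp hD
    have habs : Filter.Tendsto (fun t => |slope (fun t : ℝ => f (x + t • w)) 0 t|)
        (nhdsWithin 0 {(0:ℝ)}ᶜ) (nhds |(inner ℝ g w : ℝ)|) := hslope.abs
    have hbound : ∀ t ∈ ({(0:ℝ)}ᶜ : Set ℝ),
        |slope (fun t : ℝ => f (x + t • w)) 0 t| ≤ η w := by
      intro t ht
      have htne : t ≠ 0 := ht
      have h1 : |f (x + t • w) - f (x + (0:ℝ) • w)| ≤ η ((t : ℝ) • w) := by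
        have := etaDist_abs_sub hconv heven hhom hA (x + t • w) (x + (0:ℝ) • w)
        have heq : (x + t • w) - (x + (0:ℝ) • w) = t • w := by
          simp
        rw [heq] at this
        exact this
      rw [eta_smul heven hhom] at h1
      simp only [slope_def_field, sub_zero, abs_div]
      rw [div_le_iff₀ (abs_pos.mpr htne)]
      calc |f (x + t • w) - f (x + (0:ℝ) • w)| ≤ |t| * η w := h1
        _ = η w * |t| := mul_comm _ _
    have hle : |(inner ℝ g w : ℝ)| ≤ η w := by
      refine le_of_tendsto habs ?_
      exact Filter.eventually_of_mem self_mem_nhdsWithin hbound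
    calc (inner ℝ w g : ℝ) = inner ℝ g w := real_inner_comm _ _
      _ ≤ |(inner ℝ g w : ℝ)| := le_abs_self _
      _ ≤ η w := hle
      _ ≤ 1 := hw
  · -- attainment
    obtain ⟨y, hyA, hyd⟩ := etaDist_attains hconv heven hhom hpos hAc hA x
    set d : ℝ := η (x - y) with hdd
    have hdpos : 0 < d := by
      apply hpos
      intro h
      apply hx
      have : x = y := by
        have := sub_eq_zero.mp h
        exact this
      rwa [this]
    have hfx : f x = d := hyd
    set v : EuclideanSpace ℝ (Fin N) := y - x with hv
    have hD := hdir v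
    have hslope := hasDerivAt_iff_tendsto_slope.mp hD
    -- on (0,1), slope is constantly -d
    have hval : ∀ t ∈ Ioo (0:ℝ) 1, slope (fun t : ℝ => f (x + t • v)) 0 t = -d := by
      intro t ht
      have ht0 : 0 < t := ht.1
      have ht1 : t < 1 := ht.2
      have hphit : f (x + t • v) = (1 - t) * d := by
        have hle1 : f (x + t • v) ≤ (1 - t) * d := by
          have h1 : (x + t • v) - y = (1 - t) • (x - y) := by
            rw [hv]; module
          calc f (x + t • v) ≤ η ((x + t • v) - y) := etaDist_le hconv heven hhom hyA _
            _ = η ((1 - t) • (x - y)) := by rw [h1]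
            _ = (1 - t) * d := by rw [hhom (1 - t) (by linarith)]
        have hge1 : (1 - t) * d ≤ f (x + t • v) := by
          have h2 : f x ≤ f (x + t • v) + η (x - (x + t • v)) :=
            etaDist_lipschitz hconv heven hhom hA x (x + t • v)
          have h3 : x - (x + t • v) = t • (x - y) := by
            rw [hv]; module
          rw [h3, hhom t ht0.le, hfx] at h2
          nlinarith
        linarith
      rw [slope_def_field]
      have h0 : (fun t : ℝ => f (x + t • v)) 0 = f x := by simp
      rw [hphit]
      have : f (x + (0:ℝ) • v) = d := by simpa using hfx
      rw [this]
      field_simp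
      simp [ht0.ne']
    have hmono : nhdsWithin (0:ℝ) (Ioi 0) ≤ nhdsWithin (0:ℝ) {(0:ℝ)}ᶜ :=
      nhdsWithin_mono 0 (fun t ht => ne_of_gt ht)
    have hslope' : Filter.Tendsto (slope (fun t : ℝ => f (x + t • v)) 0)
        (nhdsWithin 0 (Ioi 0)) (nhds (inner ℝ g v : ℝ)) := hslope.mono_left hmono
    have hIoo : Ioo (0:ℝ) 1 ∈ nhdsWithin (0:ℝ) (Ioi 0) :=
      Ioo_mem_nhdsGT_of_mem ⟨le_rfl, one_pos⟩
    have hconst : Filter.Tendsto (slope (fun t : ℝ => f (x + t • v)) 0)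
        (nhdsWithin 0 (Ioi 0)) (nhds (-d)) := by
      refine Filter.Tendsto.congr' ?_ tendsto_const_nhds
      exact Filter.eventuallyEq_of_mem hIoo fun t ht => (hval t ht).symm
    have huniq : (inner ℝ g v : ℝ) = -d := tendsto_nhds_unique hslope' hconst
    refine ⟨d⁻¹ • (x - y), ?_, ?_⟩
    · rw [eta_smul heven hhom, abs_of_pos (inv_pos.mpr hdpos), ← hdd]
      rw [inv_mul_cancel₀ hdpos.ne']
    · have h1 : (inner ℝ (x - y) g : ℝ) = d := by
        have : (x - y) = -v := by rw [hv]; abel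
        rw [this, inner_neg_left, real_inner_comm, huniq]
        simp
      rw [real_inner_smul_left, h1, inv_mul_cancel₀ hdpos.ne']

end Aux

/-- Let `η` be a norm on `ℝ^N` and `E` a closed set with nonempty boundary. Then
the signed distance `d^η_E` is Lipschitz, and at every point `x ∉ ∂E` where
`d^η_E` is differentiable one has `η°(∇d^η_E x) = 1`. -/
theorem signedDist_lipschitz_and_polar_gradient_eq_one {N : ℕ}
    (η : EuclideanSpace ℝ (Fin N) → ℝ)
    (hconv : ConvexOn ℝ Set.univ η)
    (heven : ∀ x, η (-x) = η x)
    (hhom : ∀ (c : ℝ), 0 ≤ c → ∀ x, η (c • x) = c * η x)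
    (hpos : ∀ x, x ≠ 0 → 0 < η x)
    (E : Set (EuclideanSpace ℝ (Fin N))) (hE : IsClosed E)
    (hfr : (frontier E).Nonempty) :
    (∃ K : NNReal, LipschitzWith K (etaSignedDist η E)) ∧
      ∀ x ∉ frontier E, DifferentiableAt ℝ (etaSignedDist η E) x →
        sSup ((fun w => (inner ℝ w (gradient (etaSignedDist η E) x) : ℝ)) '' {w | η w ≤ 1}) = 1 := by
  obtain ⟨C, hC, hCle⟩ := eta_upper hconv heven hhom
  -- E and Eᶜ are nonempty
  have hEne : E.Nonempty := by
    obtain ⟨z, hz⟩ := hfr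
    exact ⟨z, hE.closure_eq ▸ (frontier_subset_closure hz)⟩
  have hEcne : Eᶜ.Nonempty := by
    rw [Set.nonempty_compl]
    intro h
    rw [h, frontier_univ] at hfr
    exact Set.not_nonempty_empty hfr
  constructor
  · -- Lipschitz
    refine ⟨Real.toNNReal (2 * C), ?_⟩
    apply LipschitzWith.of_dist_le_mul
    intro a b
    rw [Real.dist_eq, dist_eq_norm]
    have h1 : |etaDist η E a - etaDist η E b| ≤ η (a - b) :=
      etaDist_abs_sub hconv heven hhom hEne a b
    have h2 : |etaDist η Eᶜ a - etaDist η Eᶜ b| ≤ η (a - b) :=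
      etaDist_abs_sub hconv heven hhom hEcne a b
    have h3 : η (a - b) ≤ C * ‖a - b‖ := hCle _
    have h4 : (Real.toNNReal (2 * C) : ℝ) = 2 * C := Real.coe_toNNReal _ (by positivity)
    rw [h4]
    have : |etaSignedDist η E a - etaSignedDist η E b|
        ≤ |etaDist η E a - etaDist η E b| + |etaDist η Eᶜ a - etaDist η Eᶜ b| := by
      unfold etaSignedDist
      have := abs_sub (etaDist η E a - etaDist η E b) (etaDist η Eᶜ a - etaDist η Eᶜ b)
      calc |etaDist η E a - etaDist η Eᶜ a - (etaDist η E b - etaDist η Eᶜ b)|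
          = |(etaDist η E a - etaDist η E b) - (etaDist η Eᶜ a - etaDist η Eᶜ b)| := by ring_nf
        _ ≤ _ := abs_sub _ _
    linarith
  · -- gradient part
    intro x hxfr hdiff
    -- two cases
    have hcases : x ∈ interior E ∨ x ∉ E := by
      by_cases hxE : x ∈ E
      · left
        by_contra hxi
        exact hxfr ⟨subset_closure hxE, hxi⟩
      · right; exact hxE
    -- we produce G with etaSignedDist's gradient = G and the two key facts
    obtain ⟨hub, hmem⟩ : (∀ w, η w ≤ 1 →
          (inner ℝ w (gradient (etaSignedDist η E) x) : ℝ) ≤ 1) ∧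
        ∃ w, η w ≤ 1 ∧ (inner ℝ w (gradient (etaSignedDist η E) x) : ℝ) = 1 := by
      rcases hcases with hxi | hxE
      · -- x in interior E : signed dist = - etaDist (closure Eᶜ) near x
        set A : Set (EuclideanSpace ℝ (Fin N)) := closure Eᶜ with hA
        have hAc : IsClosed A := isClosed_closure
        have hAne : A.Nonempty := hEcne.closure
        have hxA : x ∉ A := by
          rw [hA, closure_compl]
          simpa using hxi
        have hclos : ∀ z, etaDist η Eᶜ z = etaDist η A z := fun z =>
          (etaDist_closure hconv heven hhom hEcne z).symm
        have heq : etaSignedDist η E =ᶠ[nhds x] (fun z => -(etaDist η A z)) := by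
          filter_upwards [isOpen_interior.mem_nhds hxi] with z hz
          unfold etaSignedDist
          rw [etaDist_zero_of_mem hconv heven hhom (interior_subset hz), hclos z]
          ring
        have hdiff2 : DifferentiableAt ℝ (fun z => -(etaDist η A z)) x :=
          (Filter.EventuallyEq.differentiableAt_iff heq.symm).mpr hdiff
        have hdiff3 : DifferentiableAt ℝ (etaDist η A) x := by
          have := hdiff2.neg
          simpa using this
        have hgradeq : gradient (etaSignedDist η E) x = -(gradient (etaDist η A) x) := by
          have h1 : gradient (etaSignedDist η E) x = gradient (fun z => -(etaDist η A z)) x :=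
            Filter.EventuallyEq.gradient_eq heq
          rw [h1]
          unfold gradient
          rw [fderiv_fun_neg]
          simp
        obtain ⟨hub', ⟨w₀, hw₀, hw₀eq⟩⟩ :=
          etaDist_gradient_key hconv heven hhom hpos hAc hAne hxA hdiff3
        rw [hgradeq]
        constructor
        · intro w hw
          have h1 : (inner ℝ w (-(gradient (etaDist η A) x)) : ℝ)
              = inner ℝ (-w) (gradient (etaDist η A) x) := by
            rw [inner_neg_right, inner_neg_left]
          rw [h1]
          exact hub' (-w) (by rw [heven]; exact hw)
        · refine ⟨-w₀, by rw [heven]; exact hw₀, ?_⟩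
          rw [inner_neg_left, inner_neg_right, neg_neg]
          exact hw₀eq
      · -- x outside E : signed dist = etaDist E near x
        have hxA : x ∉ E := hxE
        have heq : etaSignedDist η E =ᶠ[nhds x] etaDist η E := by
          filter_upwards [hE.isOpen_compl.mem_nhds hxE] with z hz
          unfold etaSignedDist
          rw [etaDist_zero_of_mem hconv heven hhom hz]
          ring
        have hdiff2 : DifferentiableAt ℝ (etaDist η E) x :=
          (Filter.EventuallyEq.differentiableAt_iff heq.symm).mpr hdiff
        have hgradeq : gradient (etaSignedDist η E) x = gradient (etaDist η E) x :=
          Filter.EventuallyEq.gradient_eq heq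
        obtain ⟨hub', hex'⟩ :=
          etaDist_gradient_key hconv heven hhom hpos hE hEne hxA hdiff2
        rw [hgradeq]
        exact ⟨hub', hex'⟩
    -- conclude about sSup
    obtain ⟨w₁, hw₁, hw₁eq⟩ := hmem
    have hubm : (1:ℝ) ∈ upperBounds
        ((fun w => (inner ℝ w (gradient (etaSignedDist η E) x) : ℝ)) '' {w | η w ≤ 1}) := by
      rintro r ⟨w, hw, rfl⟩
      exact hub w hw
    exact le_antisymm (csSup_le ⟨1, ⟨w₁, hw₁, hw₁eq⟩⟩ hubm)
      (le_csSup ⟨1, hubm⟩ ⟨w₁, hw₁, hw₁eq⟩)
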